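/- Corner uniqueness for the Navier source (core lemma): Let O = 0 ∈ ℝ², let τ₁, τ₂ ∈ ℝ² be two linearly independent unit vectors, and let Γ⁺ = {t τ₁ : 0 < t < R}, Γ⁻ = {t τ₂ : 0 < t < R}. Let w : ℝ² → ℝ² be C² on the ball B_R(O) and S : ℝ² → ℝ² continuous, satisfying μΔw + (λ+μ)∇div w + ω²w = S in B_R(O), with μ > 0, λ+2μ > 0. Suppose w = 0 on Γ⁺ ∪ Γ⁻ and the normal derivatives ∂_{ν}w = 0 on Γ⁺ ∪ Γ⁻ (where ν is a unit normal to the respective segment). Then S(O) = 0. -/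

import Mathlib

set_option maxHeartbeats 1000000

noncomputable section

/-- Points/vectors of the plane. -/
abbrev R2 := Fin 2 → ℝ

def e1 : R2 := ![1, 0]
def e2 : R2 := ![0, 1]

/-- Euclidean inner product on `R2`. -/
def inn (a b : R2) : ℝ := a 0 * b 0 + a 1 * b 1

/-- Directional derivative `∂_v w (x) = Dw(x) v`. -/
def dd (w : R2 → R2) (v x : R2) : R2 := fderiv ℝ w x v

/-- Second directional derivative `∂_u ∂_v w (x) = D²w(x)(u,v)`. -/
def d2 (w : R2 → R2) (u v x : R2) : R2 := fderiv ℝ (fun y => fderiv ℝ w y v) x u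

/-- Divergence of a planar vector field. -/
def divg (w : R2 → R2) (x : R2) : ℝ := fderiv ℝ w x e1 0 + fderiv ℝ w x e2 1

/-- Scalar curl of a planar vector field: `∂₁w₂ - ∂₂w₁`. -/
def curl2 (w : R2 → R2) (x : R2) : ℝ := fderiv ℝ w x e1 1 - fderiv ℝ w x e2 0

/-- `ν × s := (-ν₂ s, ν₁ s)` for a scalar `s`. -/
def rot (ν : R2) (s : ℝ) : R2 := ![-(ν 1) * s, ν 0 * s]

/-- Traction operator `Tw = 2μ ∂_ν w + λ ν div w + μ ν × curl w`. -/
def trac (μ lam : ℝ) (ν : R2) (w : R2 → R2) (x : R2) : R2 :=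
  (2 * μ) • dd w ν x + (lam * divg w x) • ν + μ • rot ν (curl2 w x)

/-- Günter (tangential) derivative `Mw = ∂_ν w - ν div w + ν × curl w`. -/
def gunter (ν : R2) (w : R2 → R2) (x : R2) : R2 :=
  dd w ν x - (divg w x) • ν + rot ν (curl2 w x)

/-- Componentwise Laplacian of a planar vector field. -/
def lap (w : R2 → R2) (x : R2) : R2 := d2 w e1 e1 x + d2 w e2 e2 x

/-- Scalar Laplacian. -/
def lapS (f : R2 → ℝ) (x : R2) : ℝ :=
  fderiv ℝ (fun y => fderiv ℝ f y e1) x e1 + fderiv ℝ (fun y => fderiv ℝ f y e2) x e2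

/-- Gradient of a scalar field. -/
def gradS (f : R2 → ℝ) (x : R2) : R2 := ![fderiv ℝ f x e1, fderiv ℝ f x e2]

/-- Lamé (Navier) operator `Lw = μ Δw + (λ+μ) ∇ div w`. -/
def lame (μ lam : ℝ) (w : R2 → R2) (x : R2) : R2 :=
  μ • lap w x + (lam + μ) • gradS (divg w) x

namespace Stmt10Aux

open Filter

lemma norm_le_one_of_inn {τ : R2} (hτ : inn τ τ = 1) : ‖τ‖ ≤ 1 := by
  simp only [inn] at hτ
  rw [pi_norm_le_iff_of_nonneg zero_le_one]
  intro i
  have hi : i = 0 ∨ i = 1 := by omega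
  rcases hi with h | h <;> subst h <;>
  · rw [Real.norm_eq_abs, abs_le]
    constructor <;> nlinarith [sq_nonneg (τ 0 + 1), sq_nonneg (τ 0 - 1),
      sq_nonneg (τ 1 + 1), sq_nonneg (τ 1 - 1)]

lemma seg_mem {R : ℝ} {τ : R2} (hτ : inn τ τ = 1) {t : ℝ} (h0 : 0 ≤ t) (h1 : t < R) :
    t • τ ∈ Metric.ball (0 : R2) R := by
  rw [Metric.mem_ball, dist_zero_right, norm_smul, Real.norm_eq_abs, abs_of_nonneg h0]
  calc t * ‖τ‖ ≤ t * 1 := mul_le_mul_of_nonneg_left (norm_le_one_of_inn hτ) h0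
  _ = t := mul_one t
  _ < R := h1

lemma fderiv_along_zero {E : Type*} [NormedAddCommGroup E] [NormedSpace ℝ E]
    {R : ℝ} {τ : R2} (f : R2 → E) {t₀ : ℝ} (h0 : 0 < t₀) (h1 : t₀ < R)
    (hdiff : DifferentiableAt ℝ f (t₀ • τ))
    (hz : ∀ t : ℝ, 0 < t → t < R → f (t • τ) = 0) :
    fderiv ℝ f (t₀ • τ) τ = 0 := by
  have hline : HasDerivAt (fun t : ℝ => t • τ) τ t₀ := by
    simpa using (hasDerivAt_id t₀).smul_const τ
  have hA : HasDerivAt (fun t : ℝ => f (t • τ)) (fderiv ℝ f (t₀ • τ) τ) t₀ := by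
    exact hdiff.hasFDerivAt.comp_hasDerivAt t₀ hline
  have hB : HasDerivAt (fun t : ℝ => f (t • τ)) 0 t₀ := by
    have hmem : Set.Ioo (0 : ℝ) R ∈ nhds t₀ := isOpen_Ioo.mem_nhds ⟨h0, h1⟩
    exact (hasDerivAt_const t₀ (0 : E)).congr_of_eventuallyEq
      (Filter.eventuallyEq_of_mem hmem fun t ht => hz t ht.1 ht.2)
  exact hA.unique hB

lemma limit_zero {E : Type*} [NormedAddCommGroup E] [NormedSpace ℝ E]
    {R : ℝ} (hR : 0 < R) (τ : R2) (g : R2 → E) (hc : ContinuousAt g 0)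
    (hz : ∀ t : ℝ, 0 < t → t < R → g (t • τ) = 0) : g 0 = 0 := by
  have hline : Filter.Tendsto (fun t : ℝ => t • τ) (nhdsWithin 0 (Set.Ioi 0))
      (nhds (0 : R2)) := by
    have h : Filter.Tendsto (fun t : ℝ => t • τ) (nhds 0) (nhds ((0 : ℝ) • τ)) :=
      ((continuous_id.smul continuous_const).tendsto 0)
    simpa using h.mono_left nhdsWithin_le_nhds
  have hA : Filter.Tendsto (fun t : ℝ => g (t • τ)) (nhdsWithin 0 (Set.Ioi 0)) (nhds (g 0)) :=
    hc.tendsto.comp hline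
  have hB : Filter.Tendsto (fun t : ℝ => g (t • τ)) (nhdsWithin 0 (Set.Ioi 0)) (nhds 0) := by
    apply Filter.Tendsto.congr' _ tendsto_const_nhds
    filter_upwards [Ioo_mem_nhdsGT_of_mem (Set.mem_Ico.mpr ⟨le_rfl, hR⟩)] with t ht
    exact (hz t ht.1 ht.2).symm
  exact tendsto_nhds_unique hA hB

lemma clm_eq_zero {E : Type*} [NormedAddCommGroup E] [NormedSpace ℝ E]
    (L : R2 →L[ℝ] E) {τ ν : R2} (hτ : inn τ τ = 1) (hν : inn ν ν = 1) (hn : inn ν τ = 0)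
    (h1 : L τ = 0) (h2 : L ν = 0) : L = 0 := by
  simp only [inn] at hτ hν hn
  have hd : (τ 0 * ν 1 - τ 1 * ν 0) * (τ 0 * ν 1 - τ 1 * ν 0) = 1 := by
    linear_combination (ν 0 * ν 0 + ν 1 * ν 1) * hτ + hν - (ν 0 * τ 0 + ν 1 * τ 1) * hn
  have hdne : (τ 0 * ν 1 - τ 1 * ν 0) ≠ 0 := by
    intro h; rw [h] at hd; norm_num at hd
  ext v
  have hv : v = ((v 0 * ν 1 - v 1 * ν 0) / (τ 0 * ν 1 - τ 1 * ν 0)) • τ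
      + ((τ 0 * v 1 - τ 1 * v 0) / (τ 0 * ν 1 - τ 1 * ν 0)) • ν := by
    funext i
    have hi : i = 0 ∨ i = 1 := by omega
    rcases hi with h | h <;> subst h <;>
    · simp only [Pi.add_apply, Pi.smul_apply, smul_eq_mul]
      rw [div_mul_eq_mul_div, div_mul_eq_mul_div, ← add_div, eq_div_iff hdne]
      ring
  rw [hv]
  simp [h1, h2]

def Adiv : (R2 →L[ℝ] R2) →L[ℝ] ℝ :=
  (ContinuousLinearMap.proj 0).comp (ContinuousLinearMap.apply ℝ R2 e1) +
  (ContinuousLinearMap.proj 1).comp (ContinuousLinearMap.apply ℝ R2 e2)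

lemma divg_eq (w : R2 → R2) : divg w = fun y => Adiv (fderiv ℝ w y) := by
  funext y
  simp only [divg, Adiv, ContinuousLinearMap.add_apply, ContinuousLinearMap.comp_apply,
    ContinuousLinearMap.apply_apply, ContinuousLinearMap.proj_apply]

end Stmt10Aux

open Stmt10Aux

/-- corner uniqueness for the Navier source. If `w` solves
`Lw + ω² w = S` in `B_R(0)` and vanishes together with its normal derivative on two
segments issued from the origin with linearly independent directions, then `S(0) = 0`. -/
theorem stmt_10 (μ lam ω R : ℝ) (hμ : 0 < μ) (hlam : 0 < lam + 2 * μ) (hω : 0 < ω)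
    (hR : 0 < R)
    (τ₁ τ₂ ν₁ ν₂ : R2) (hind : LinearIndependent ℝ ![τ₁, τ₂])
    (hτ1 : inn τ₁ τ₁ = 1) (hτ2 : inn τ₂ τ₂ = 1)
    (hν1 : inn ν₁ ν₁ = 1) (hν2 : inn ν₂ ν₂ = 1)
    (hn1 : inn ν₁ τ₁ = 0) (hn2 : inn ν₂ τ₂ = 0)
    (w S : R2 → R2)
    (hw : ContDiffOn ℝ 2 w (Metric.ball (0 : R2) R)) (hS : Continuous S)
    (heq : ∀ x ∈ Metric.ball (0 : R2) R, lame μ lam w x + ω ^ 2 • w x = S x)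
    (hw0 : ∀ t : ℝ, 0 < t → t < R → w (t • τ₁) = 0 ∧ w (t • τ₂) = 0)
    (hdn : ∀ t : ℝ, 0 < t → t < R →
      dd w ν₁ (t • τ₁) = 0 ∧ dd w ν₂ (t • τ₂) = 0) :
    S (0 : R2) = 0 := by
  classical
  set B := Metric.ball (0 : R2) R with hBdef
  have hBopen : IsOpen B := Metric.isOpen_ball
  have h0B : (0 : R2) ∈ B := Metric.mem_ball_self hR
  have hwd : DifferentiableOn ℝ w B := hw.differentiableOn (by norm_num)
  have hfd : ContDiffOn ℝ 1 (fderiv ℝ w) B := hw.fderiv_of_isOpen hBopen (by norm_num)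
  have hfdd : DifferentiableOn ℝ (fderiv ℝ w) B := hfd.differentiableOn (by norm_num)
  have hffc : ContinuousOn (fderiv ℝ (fderiv ℝ w)) B :=
    hfd.continuousOn_fderiv_of_isOpen hBopen le_rfl
  -- first derivative vanishes on each segment
  have key1 : ∀ (τ ν : R2), inn τ τ = 1 → inn ν ν = 1 → inn ν τ = 0 →
      (∀ t : ℝ, 0 < t → t < R → w (t • τ) = 0) →
      (∀ t : ℝ, 0 < t → t < R → fderiv ℝ w (t • τ) ν = 0) →
      ∀ t : ℝ, 0 < t → t < R → fderiv ℝ w (t • τ) = 0 := by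
    intro τ ν hτ hν hn hz hd t ht htR
    have hmem : t • τ ∈ B := seg_mem hτ ht.le htR
    have hτ0 : fderiv ℝ w (t • τ) τ = 0 :=
      fderiv_along_zero w ht htR (hwd.differentiableAt (hBopen.mem_nhds hmem)) hz
    exact clm_eq_zero _ hτ hν hn hτ0 (hd t ht htR)
  have k1 : ∀ t : ℝ, 0 < t → t < R → fderiv ℝ w (t • τ₁) = 0 :=
    key1 τ₁ ν₁ hτ1 hν1 hn1 (fun t a b => (hw0 t a b).1) (fun t a b => (hdn t a b).1)
  have k2 : ∀ t : ℝ, 0 < t → t < R → fderiv ℝ w (t • τ₂) = 0 :=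
    key1 τ₂ ν₂ hτ2 hν2 hn2 (fun t a b => (hw0 t a b).2) (fun t a b => (hdn t a b).2)
  -- second derivative in direction τᵢ vanishes on segment i
  have key2 : ∀ (τ : R2), inn τ τ = 1 →
      (∀ t : ℝ, 0 < t → t < R → fderiv ℝ w (t • τ) = 0) →
      ∀ t : ℝ, 0 < t → t < R → fderiv ℝ (fderiv ℝ w) (t • τ) τ = 0 := by
    intro τ hτ hz t ht htR
    have hmem : t • τ ∈ B := seg_mem hτ ht.le htR
    exact fderiv_along_zero (fderiv ℝ w) ht htR
      (hfdd.differentiableAt (hBopen.mem_nhds hmem)) hz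
  -- the full second derivative vanishes at the origin
  have hffca : ContinuousAt (fderiv ℝ (fderiv ℝ w)) 0 :=
    hffc.continuousAt (hBopen.mem_nhds h0B)
  have Hτ : ∀ (τ : R2), inn τ τ = 1 →
      (∀ t : ℝ, 0 < t → t < R → fderiv ℝ (fderiv ℝ w) (t • τ) τ = 0) →
      fderiv ℝ (fderiv ℝ w) 0 τ = 0 := by
    intro τ hτ hz
    have hcont : ContinuousAt (fun x => fderiv ℝ (fderiv ℝ w) x τ) 0 := by
      have h := ((ContinuousLinearMap.apply ℝ (R2 →L[ℝ] R2) τ).continuous.continuousAt).comp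
        hffca
      exact h
    exact limit_zero hR τ (fun x => fderiv ℝ (fderiv ℝ w) x τ) hcont hz
  have H1 : fderiv ℝ (fderiv ℝ w) 0 τ₁ = 0 := Hτ τ₁ hτ1 (key2 τ₁ hτ1 k1)
  have H2 : fderiv ℝ (fderiv ℝ w) 0 τ₂ = 0 := Hτ τ₂ hτ2 (key2 τ₂ hτ2 k2)
  have hcard : Fintype.card (Fin 2) = Module.finrank ℝ R2 := by
    simp [Module.finrank_fin_fun]
  have hH : ∀ u : R2, fderiv ℝ (fderiv ℝ w) 0 u = 0 := by
    intro u
    let b := basisOfLinearIndependentOfCardEqFinrank hind hcard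
    have hco : ⇑b = ![τ₁, τ₂] := coe_basisOfLinearIndependentOfCardEqFinrank hind hcard
    have hb : ((fderiv ℝ (fderiv ℝ w) 0 : R2 →L[ℝ] (R2 →L[ℝ] R2)) : R2 →ₗ[ℝ] (R2 →L[ℝ] R2))
        = (0 : R2 →ₗ[ℝ] (R2 →L[ℝ] R2)) := by
      apply b.ext
      intro i
      simp only [LinearMap.zero_apply, ContinuousLinearMap.coe_coe]
      fin_cases i
      · rw [hco]; simpa using H1
      · rw [hco]; simpa using H2
    simpa using LinearMap.congr_fun hb u
  have hfd0 : DifferentiableAt ℝ (fderiv ℝ w) 0 := hfdd.differentiableAt (hBopen.mem_nhds h0B)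
  -- second directional derivatives at the origin
  have hd2 : ∀ u v : R2, d2 w u v 0 = 0 := by
    intro u v
    have hcomp : HasFDerivAt (fun y => fderiv ℝ w y v)
        ((ContinuousLinearMap.apply ℝ R2 v).comp (fderiv ℝ (fderiv ℝ w) 0)) 0 := by
      have h := (ContinuousLinearMap.apply ℝ R2 v).hasFDerivAt.comp (0 : R2) hfd0.hasFDerivAt
      simpa [Function.comp] using h
    rw [d2, hcomp.fderiv]
    simp [ContinuousLinearMap.comp_apply, hH u]
  -- gradient of divergence at the origin
  have hdivg : ∀ u : R2, fderiv ℝ (divg w) 0 u = 0 := by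
    have hcomp : HasFDerivAt (fun y => Adiv (fderiv ℝ w y))
        (Adiv.comp (fderiv ℝ (fderiv ℝ w) 0)) 0 := by
      have h := Adiv.hasFDerivAt.comp (0 : R2) hfd0.hasFDerivAt
      exact h
    intro u
    rw [divg_eq, hcomp.fderiv, ContinuousLinearMap.comp_apply, hH u, map_zero]
  -- value at the origin
  have hw00 : w 0 = 0 :=
    limit_zero hR τ₁ w (hw.continuousOn.continuousAt (hBopen.mem_nhds h0B))
      (fun t a bb => (hw0 t a bb).1)
  have hSeq := heq 0 h0B
  rw [← hSeq]
  have hlap : lap w 0 = 0 := by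
    rw [lap, hd2, hd2]; simp
  have hgrad : gradS (divg w) 0 = 0 := by
    funext i
    have hi : i = 0 ∨ i = 1 := by omega
    rcases hi with h | h <;> subst h <;> simp [gradS, hdivg]
  rw [lame, hlap, hgrad, hw00]
  simp
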